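/- The weighted set-theoretic similarity s_12(A,B) = ∑_i w_i · (∑_j min(a_{ij}, b_{ij}))/(∑_j max(a_{ij}, b_{ij})) satisfies: if 0 < a_{ij} ≤ b_{ij} ≤ c_{ij} for all i, j, then s_12(A,C) ≤ s_12(A,B) and s_12(A,C) ≤ s_12(B,C). -/

import Mathlib

theorem s12_mono (m : ℕ) (hm : 0 < m) (n : Fin m → ℕ) (hn : ∀ i, 1 ≤ n i)
    (w : Fin m → ℝ) (hw : ∀ i, w i ∈ Set.Icc (0:ℝ) 1) (hw1 : ∑ i, w i = 1)
    (a b c : (i : Fin m) → Fin (n i) → ℝ)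
    (ha : ∀ i j, 0 < a i j)
    (hab : ∀ i j, a i j ≤ b i j) (hbc : ∀ i j, b i j ≤ c i j) :
    (∑ i, w i * ((∑ j, min (a i j) (c i j)) / (∑ j, max (a i j) (c i j))) ≤
      ∑ i, w i * ((∑ j, min (a i j) (b i j)) / (∑ j, max (a i j) (b i j)))) ∧
    (∑ i, w i * ((∑ j, min (a i j) (c i j)) / (∑ j, max (a i j) (c i j))) ≤
      ∑ i, w i * ((∑ j, min (b i j) (c i j)) / (∑ j, max (b i j) (c i j)))) := by
  have hac : ∀ i j, a i j ≤ c i j := fun i j => (hab i j).trans (hbc i j)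
  have hmin : ∀ i j, min (a i j) (c i j) = a i j := fun i j => min_eq_left (hac i j)
  have hmax : ∀ i j, max (a i j) (c i j) = c i j := fun i j => max_eq_right (hac i j)
  have hminab : ∀ i j, min (a i j) (b i j) = a i j := fun i j => min_eq_left (hab i j)
  have hmaxab : ∀ i j, max (a i j) (b i j) = b i j := fun i j => max_eq_right (hab i j)
  have hminbc : ∀ i j, min (b i j) (c i j) = b i j := fun i j => min_eq_left (hbc i j)
  have hmaxbc : ∀ i j, max (b i j) (c i j) = c i j := fun i j => max_eq_right (hbc i j)
  simp only [hmin, hmax, hminab, hmaxab, hminbc, hmaxbc]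
  have key : ∀ i : Fin m,
      0 < ∑ j, a i j ∧ (∑ j, a i j) ≤ ∑ j, b i j ∧ (∑ j, b i j) ≤ ∑ j, c i j := by
    intro i
    refine ⟨?_, Finset.sum_le_sum fun j _ => hab i j, Finset.sum_le_sum fun j _ => hbc i j⟩
    have : (Finset.univ : Finset (Fin (n i))).Nonempty := by
      simpa [Finset.univ_nonempty_iff, ← Fin.pos_iff_nonempty] using Nat.lt_of_succ_le (hn i)
    exact Finset.sum_pos (fun j _ => ha i j) this
  constructor
  · refine Finset.sum_le_sum fun i _ => ?_
    obtain ⟨hA, hAB, hBC⟩ := key i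
    have hB : 0 < ∑ j, b i j := hA.trans_le hAB
    exact mul_le_mul_of_nonneg_left
      (div_le_div_of_nonneg_left hA.le hB hBC) (hw i).1
  · refine Finset.sum_le_sum fun i _ => ?_
    obtain ⟨hA, hAB, hBC⟩ := key i
    have hC : 0 < ∑ j, c i j := (hA.trans_le hAB).trans_le hBC
    exact mul_le_mul_of_nonneg_left
      (div_le_div_of_nonneg_right hAB hC.le) (hw i).1
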